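/- Let m ≥ 2. Given the affine Hjelmslev construction data — an affine plane 𝒜 of order m; for each point p of 𝒜 an affine plane 𝒜_p of order m; for each line l of 𝒜 an orthogonal array 𝒪_l = OA(2, m, m) whose columns are labeled by the m points of l; and for each incident pair (p, l) a parallel class C(p,l) of 𝒜_p with its m lines labeled bijectively by the m symbols of 𝒪_l, such that distinct lines of 𝒜 through p receive distinct parallel classes of 𝒜_p — define the incidence structure ℋ whose points are pairs (p, a) with a a point of 𝒜_p, whose lines are pairs (l, r) with r a row of 𝒪_l, with (p, a) incident with (l, r) iff p lies on l and a lies on the line of C(p,l) labeled by the entry of 𝒪_l in row r and column p. Then ℋ, with point-neighbour relation (p,a) ∼ (p',a') iff p = p', line-neighbour relation (l,r) ∼ (l',r') iff l = l', and the quotient map φ(p,a) = p, φ(l,r) = l, is a 2-uniform (m,m) affine Hjelmslev plane with m⁴ points. -/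

import Mathlib

/-- A projective plane: any two distinct points lie on a unique common line, any two distinct
lines meet in a unique point, and there are four points no three of which are collinear. -/
structure IsProjectivePlane {P L : Type} (I : P → L → Prop) : Prop where
  point_line : ∀ p q : P, p ≠ q → ∃! l : L, I p l ∧ I q l
  line_point : ∀ g h : L, g ≠ h → ∃! p : P, I p g ∧ I p h
  nondeg : ∃ a b c d : P, a ≠ b ∧ a ≠ c ∧ a ≠ d ∧ b ≠ c ∧ b ≠ d ∧ c ≠ d ∧
    (∀ l : L, ¬(I a l ∧ I b l ∧ I c l)) ∧ (∀ l : L, ¬(I a l ∧ I b l ∧ I d l)) ∧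
    (∀ l : L, ¬(I a l ∧ I c l ∧ I d l)) ∧ (∀ l : L, ¬(I b l ∧ I c l ∧ I d l))

/-- A projective plane has order `m` if every line is incident with exactly `m + 1` points. -/
def ProjOrder {P L : Type} (I : P → L → Prop) (m : ℕ) : Prop :=
  ∀ l : L, Nat.card {p : P // I p l} = m + 1

/-- An affine plane: any two distinct points lie on a unique common line, for every
non-incident point–line pair there is a unique line through the point disjoint from the
line, and there exist three non-collinear points. -/
structure IsAffinePlane {P L : Type} (I : P → L → Prop) : Prop where
  point_line : ∀ p q : P, p ≠ q → ∃! l : L, I p l ∧ I q l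
  playfair : ∀ (p : P) (l : L), ¬ I p l → ∃! g : L, I p g ∧ ∀ q : P, ¬(I q l ∧ I q g)
  nondeg : ∃ a b c : P, a ≠ b ∧ a ≠ c ∧ b ≠ c ∧ ∀ l : L, ¬(I a l ∧ I b l ∧ I c l)

/-- An affine plane has order `m` if every line is incident with exactly `m` points. -/
def AffOrder {P L : Type} (I : P → L → Prop) (m : ℕ) : Prop :=
  ∀ l : L, Nat.card {p : P // I p l} = m

/-- Two lines are parallel if they are equal or disjoint. -/
def Parallel {P L : Type} (I : P → L → Prop) (g h : L) : Prop :=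
  g = h ∨ ∀ p : P, ¬(I p g ∧ I p h)

/-- A parallel class: an equivalence class of lines under parallelism. -/
def IsParallelClass {P L : Type} (I : P → L → Prop) (Cl : Set L) : Prop :=
  ∃ g : L, Cl = {h : L | Parallel I g h}

/-- The (strength-2) orthogonal array property: for any two distinct columns, the map sending
a row to its pair of entries in those columns is a bijection onto `S × S`, i.e. each ordered
pair of symbols occurs in exactly one row. -/
def IsOrthArray2 {R Col S : Type} (F : R → Col → S) : Prop :=
  ∀ c₁ c₂ : Col, c₁ ≠ c₂ → Function.Bijective (fun r : R => (F r c₁, F r c₂))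
/-- Data for the (projective) Hjelmslev construction: a projective plane `𝒫` of order `m`;
for each point `p` of `𝒫` an affine plane `𝒜_p` of order `m`; for each line `l` of `𝒫` an
orthogonal array `OA(2, m+1, m)` whose columns are indexed by the `m+1` points of `l`; and
for each incident pair `(p, l)` a parallel class of `𝒜_p` whose `m` lines are labeled
bijectively by the `m` symbols of `𝒪_l`, such that distinct lines of `𝒫` through `p`
receive distinct parallel classes of `𝒜_p`. -/
structure PHData (m : ℕ) : Type 1 where
  /-- points of the projective plane `𝒫` -/
  Pt : Type
  /-- lines of the projective plane `𝒫` -/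
  Ln : Type
  /-- incidence of `𝒫` -/
  I : Pt → Ln → Prop
  proj : IsProjectivePlane I
  ord : ProjOrder I m
  /-- points of the affine plane `𝒜_p` -/
  APt : Pt → Type
  /-- lines of the affine plane `𝒜_p` -/
  ALn : Pt → Type
  /-- incidence of `𝒜_p` -/
  AI : ∀ p : Pt, APt p → ALn p → Prop
  aff : ∀ p : Pt, IsAffinePlane (AI p)
  aord : ∀ p : Pt, AffOrder (AI p) m
  /-- rows of the orthogonal array `𝒪_l` -/
  Row : Ln → Type
  /-- symbols of the orthogonal array `𝒪_l` -/
  Sym : Ln → Type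
  row_card : ∀ l : Ln, Nat.card (Row l) = m ^ 2
  sym_card : ∀ l : Ln, Nat.card (Sym l) = m
  /-- the orthogonal array `𝒪_l`, with columns labeled by the points of `l` -/
  O : ∀ l : Ln, Row l → {p : Pt // I p l} → Sym l
  oa : ∀ l : Ln, IsOrthArray2 (O l)
  /-- the labeling of the chosen parallel class `C(p, l)`: symbol `s` labels line `C p l h s` -/
  C : ∀ (p : Pt) (l : Ln), I p l → Sym l → ALn p
  C_inj : ∀ (p : Pt) (l : Ln) (h : I p l), Function.Injective (C p l h)
  C_class : ∀ (p : Pt) (l : Ln) (h : I p l), IsParallelClass (AI p) (Set.range (C p l h))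
  C_distinct : ∀ (p : Pt) (l₁ l₂ : Ln) (h₁ : I p l₁) (h₂ : I p l₂), l₁ ≠ l₂ →
    Set.range (C p l₁ h₁) ≠ Set.range (C p l₂ h₂)

/-- Points of the constructed structure `ℋ`: pairs `(p, a)` with `p` a point of `𝒫` and `a`
a point of `𝒜_p`. -/
def PHData.HPt {m : ℕ} (D : PHData m) : Type := Σ p : D.Pt, D.APt p

/-- Lines of the constructed structure `ℋ`: pairs `(l, r)` with `l` a line of `𝒫` and `r` a
row of `𝒪_l`. -/
def PHData.HLn {m : ℕ} (D : PHData m) : Type := Σ l : D.Ln, D.Row l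

/-- Incidence of `ℋ`: `(p, a)` is incident with `(l, r)` iff `p` lies on `l` and `a` lies on
the line of `C(p, l)` labeled by the entry of `𝒪_l` in row `r` and column `p`. -/
def PHData.HI {m : ℕ} (D : PHData m) : D.HPt → D.HLn → Prop :=
  fun x g => ∃ h : D.I x.1 g.1, D.AI x.1 x.2 (D.C x.1 g.1 h (D.O g.1 g.2 ⟨x.1, h⟩))

/-- Point-neighbour relation of `ℋ`: `(p, a) ∼ (p', a')` iff `p = p'`. -/
def PHData.nPt {m : ℕ} (D : PHData m) : D.HPt → D.HPt → Prop := fun x y => x.1 = y.1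

/-- Line-neighbour relation of `ℋ`: `(l, r) ∼ (l', r')` iff `l = l'`. -/
def PHData.nLn {m : ℕ} (D : PHData m) : D.HLn → D.HLn → Prop := fun g h => g.1 = h.1

/-- `ℋ = (I, nP, nL)` is a projective Hjelmslev plane with (specified) epimorphism
`(φP, φL)` onto the projective plane `I'`. -/
structure IsPHPlaneWith {P L P' L' : Type} (I : P → L → Prop)
    (nP : P → P → Prop) (nL : L → L → Prop)
    (I' : P' → L' → Prop) (φP : P → P') (φL : L → L') : Prop where
  nP_equiv : Equivalence nP
  nL_equiv : Equivalence nL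
  join : ∀ p q : P, ∃ l : L, I p l ∧ I q l
  meet : ∀ g h : L, ∃ p : P, I p g ∧ I p h
  line_nbr : ∀ g h : L, (∃ p q : P, p ≠ q ∧ I p g ∧ I p h ∧ I q g ∧ I q h) → nL g h
  point_nbr : ∀ p q : P, (∃ g h : L, g ≠ h ∧ I p g ∧ I q g ∧ I p h ∧ I q h) → nP p q
  target_proj : IsProjectivePlane I'
  φP_surj : Function.Surjective φP
  φL_surj : Function.Surjective φL
  incid_pres : ∀ (p : P) (l : L), I p l → I' (φP p) (φL l)
  nP_iff : ∀ p q : P, φP p = φP q ↔ nP p q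
  nL_iff : ∀ g h : L, φL g = φL h ↔ nL g h

/-- `ℋ = (I, nP, nL)` is an affine Hjelmslev plane with (specified) epimorphism
`(φP, φL)` onto the affine plane `I'`. -/
structure IsAHPlaneWith {P L P' L' : Type} (I : P → L → Prop)
    (nP : P → P → Prop) (nL : L → L → Prop)
    (I' : P' → L' → Prop) (φP : P → P') (φL : L → L') : Prop where
  nP_equiv : Equivalence nP
  nL_equiv : Equivalence nL
  join : ∀ p q : P, ∃ l : L, I p l ∧ I q l
  line_nbr : ∀ g h : L, (∃ p q : P, p ≠ q ∧ I p g ∧ I p h ∧ I q g ∧ I q h) → nL g h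
  target_aff : IsAffinePlane I'
  φP_surj : Function.Surjective φP
  φL_surj : Function.Surjective φL
  incid_pres : ∀ (p : P) (l : L), I p l → I' (φP p) (φL l)
  nP_iff : ∀ p q : P, φP p = φP q ↔ nP p q
  nL_iff : ∀ g h : L, φL g = φL h ↔ nL g h
  par : ∀ g h : L, (∀ p : P, ¬(I p g ∧ I p h)) → Parallel I' (φL g) (φL h)

/-- Each point of each line has exactly `t` neighbours on that line. -/
def NbrsOnLines {P L : Type} (I : P → L → Prop) (nP : P → P → Prop) (t : ℕ) : Prop :=
  ∀ (l : L) (p : P), I p l → Nat.card {q : P // I q l ∧ nP p q} = t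

/-- `ℋ` is a projective Hjelmslev plane (with associated projective plane unspecified). -/
def IsPHPlane {P L : Type} (I : P → L → Prop) (nP : P → P → Prop) (nL : L → L → Prop) :
    Prop :=
  ∃ (P' L' : Type) (I' : P' → L' → Prop) (φP : P → P') (φL : L → L'),
    IsPHPlaneWith I nP nL I' φP φL

/-- `ℋ` is a `(t, r)` projective Hjelmslev plane: each point of each line has exactly `t`
neighbours on that line, and the associated projective plane has order `r`. -/
def IsTRPHPlane {P L : Type} (I : P → L → Prop) (nP : P → P → Prop) (nL : L → L → Prop)
    (t r : ℕ) : Prop :=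
  ∃ (P' L' : Type) (I' : P' → L' → Prop) (φP : P → P') (φL : L → L'),
    IsPHPlaneWith I nP nL I' φP φL ∧ ProjOrder I' r ∧ NbrsOnLines I nP t

/-- `ℋ` is a `(t, r)` affine Hjelmslev plane: each point of each line has exactly `t`
neighbours on that line, and the associated affine plane has order `r`. -/
def IsTRAHPlane {P L : Type} (I : P → L → Prop) (nP : P → P → Prop) (nL : L → L → Prop)
    (t r : ℕ) : Prop :=
  ∃ (P' L' : Type) (I' : P' → L' → Prop) (φP : P → P') (φL : L → L'),
    IsAHPlaneWith I nP nL I' φP φL ∧ AffOrder I' r ∧ NbrsOnLines I nP t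

/-- The lines of the point-neighbourhood restriction at `p`: the nonempty intersections of
lines of `ℋ` with the neighbourhood of `p`, viewed as sets of points. -/
def NbrLines {P L : Type} (I : P → L → Prop) (nP : P → P → Prop) (p : P) : Set (Set P) :=
  {s : Set P | s.Nonempty ∧ ∃ g : L, s = {q : P | nP q p ∧ I q g}}

/-- `ℋ` is 2-uniform: every point-neighbourhood restriction is an ordinary affine plane, and
for each point, every line of the restriction is the restriction of the same number of lines
of `ℋ`. -/
def TwoUniform {P L : Type} (I : P → L → Prop) (nP : P → P → Prop) : Prop :=
  ∀ p : P,
    IsAffinePlane (fun (q : {q : P // nP q p}) (s : NbrLines I nP p) =>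
      (q : P) ∈ (s : Set P)) ∧
    ∃ n : ℕ, ∀ s : NbrLines I nP p,
      Nat.card {g : L // {q : P | nP q p ∧ I q g} = (s : Set P)} = n
/-- Data for the affine Hjelmslev construction: an affine plane `𝒜` of order `m`; for each
point `p` of `𝒜` an affine plane `𝒜_p` of order `m`; for each line `l` of `𝒜` an orthogonal
array `OA(2, m, m)` whose columns are indexed by the `m` points of `l`; and for each incident
pair `(p, l)` a parallel class of `𝒜_p` whose `m` lines are labeled bijectively by the `m`
symbols of `𝒪_l`, such that distinct lines of `𝒜` through `p` receive distinct parallel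
classes of `𝒜_p`. -/
structure AHData (m : ℕ) : Type 1 where
  /-- points of the base affine plane `𝒜` -/
  Pt : Type
  /-- lines of the base affine plane `𝒜` -/
  Ln : Type
  /-- incidence of `𝒜` -/
  I : Pt → Ln → Prop
  base : IsAffinePlane I
  ord : AffOrder I m
  /-- points of the affine plane `𝒜_p` -/
  APt : Pt → Type
  /-- lines of the affine plane `𝒜_p` -/
  ALn : Pt → Type
  /-- incidence of `𝒜_p` -/
  AI : ∀ p : Pt, APt p → ALn p → Prop
  aff : ∀ p : Pt, IsAffinePlane (AI p)
  aord : ∀ p : Pt, AffOrder (AI p) m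
  /-- rows of the orthogonal array `𝒪_l` -/
  Row : Ln → Type
  /-- symbols of the orthogonal array `𝒪_l` -/
  Sym : Ln → Type
  row_card : ∀ l : Ln, Nat.card (Row l) = m ^ 2
  sym_card : ∀ l : Ln, Nat.card (Sym l) = m
  /-- the orthogonal array `𝒪_l`, with columns labeled by the points of `l` -/
  O : ∀ l : Ln, Row l → {p : Pt // I p l} → Sym l
  oa : ∀ l : Ln, IsOrthArray2 (O l)
  /-- the labeling of the chosen parallel class `C(p, l)`: symbol `s` labels line `C p l h s` -/
  C : ∀ (p : Pt) (l : Ln), I p l → Sym l → ALn p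
  C_inj : ∀ (p : Pt) (l : Ln) (h : I p l), Function.Injective (C p l h)
  C_class : ∀ (p : Pt) (l : Ln) (h : I p l), IsParallelClass (AI p) (Set.range (C p l h))
  C_distinct : ∀ (p : Pt) (l₁ l₂ : Ln) (h₁ : I p l₁) (h₂ : I p l₂), l₁ ≠ l₂ →
    Set.range (C p l₁ h₁) ≠ Set.range (C p l₂ h₂)

/-- Points of the constructed structure `ℋ`: pairs `(p, a)` with `p` a point of `𝒜` and `a`
a point of `𝒜_p`. -/
def AHData.HPt {m : ℕ} (D : AHData m) : Type := Σ p : D.Pt, D.APt p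

/-- Lines of the constructed structure `ℋ`: pairs `(l, r)` with `l` a line of `𝒜` and `r` a
row of `𝒪_l`. -/
def AHData.HLn {m : ℕ} (D : AHData m) : Type := Σ l : D.Ln, D.Row l

/-- Incidence of `ℋ`: `(p, a)` is incident with `(l, r)` iff `p` lies on `l` and `a` lies on
the line of `C(p, l)` labeled by the entry of `𝒪_l` in row `r` and column `p`. -/
def AHData.HI {m : ℕ} (D : AHData m) : D.HPt → D.HLn → Prop :=
  fun x g => ∃ h : D.I x.1 g.1, D.AI x.1 x.2 (D.C x.1 g.1 h (D.O g.1 g.2 ⟨x.1, h⟩))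

/-- Point-neighbour relation of `ℋ`: `(p, a) ∼ (p', a')` iff `p = p'`. -/
def AHData.nPt {m : ℕ} (D : AHData m) : D.HPt → D.HPt → Prop := fun x y => x.1 = y.1

/-- Line-neighbour relation of `ℋ`: `(l, r) ∼ (l', r')` iff `l = l'`. -/
def AHData.nLn {m : ℕ} (D : AHData m) : D.HLn → D.HLn → Prop := fun g h => g.1 = h.1

section APHelpers

variable {P L : Type} {I : P → L → Prop} {m : ℕ}

theorem ap_line_finite (hO : AffOrder I m) (hm : 2 ≤ m) (l : L) : Finite {p : P // I p l} :=
  Nat.finite_of_card_ne_zero (by rw [hO l]; omega)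

theorem ap_line_exists (hO : AffOrder I m) (hm : 2 ≤ m) (l : L) : ∃ p : P, I p l := by
  have h := Nat.card_ne_zero.mp (by rw [hO l]; omega : Nat.card {p : P // I p l} ≠ 0)
  obtain ⟨⟨p, hp⟩⟩ := h.1
  exact ⟨p, hp⟩

theorem ap_line_two (hO : AffOrder I m) (hm : 2 ≤ m) (l : L) :
    ∃ p q : P, p ≠ q ∧ I p l ∧ I q l := by
  have hf : Finite {p : P // I p l} := ap_line_finite hO hm l
  have h2 : 1 < Nat.card {p : P // I p l} := by rw [hO l]; omega
  letI := Fintype.ofFinite {p : P // I p l}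
  rw [Nat.card_eq_fintype_card] at h2
  obtain ⟨⟨p, hp⟩, ⟨q, hq⟩, hne⟩ := Fintype.one_lt_card_iff_nontrivial.mp h2
  exact ⟨p, q, fun h => hne (Subtype.ext h), hp, hq⟩

theorem ap_line_ext (hA : IsAffinePlane I) (hO : AffOrder I m) (hm : 2 ≤ m) {g h : L}
    (he : ∀ p : P, I p g ↔ I p h) : g = h := by
  obtain ⟨p, q, hpq, hpg, hqg⟩ := ap_line_two hO hm g
  obtain ⟨l, -, hu⟩ := hA.point_line p q hpq
  rw [hu g ⟨hpg, hqg⟩, hu h ⟨(he p).mp hpg, (he q).mp hqg⟩]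

theorem ap_par_symm (hA : IsAffinePlane I) {g h : L} (hp : Parallel I g h) : Parallel I h g := by
  rcases hp with rfl | hd
  · exact Or.inl rfl
  · exact Or.inr fun p ⟨h1, h2⟩ => hd p ⟨h2, h1⟩

theorem ap_par_trans (hA : IsAffinePlane I) {g h k : L} (h1 : Parallel I g h)
    (h2 : Parallel I h k) : Parallel I g k := by
  rcases h1 with rfl | hd1
  · exact h2
  rcases h2 with rfl | hd2
  · exact Or.inr hd1
  by_contra hc
  rw [Parallel, not_or, not_forall] at hc
  obtain ⟨hgk, p, hp⟩ := hc
  rw [not_not] at hp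
  obtain ⟨hpg, hpk⟩ := hp
  have hph : ¬ I p h := fun hph => hd1 p ⟨hpg, hph⟩
  obtain ⟨u, -, hu⟩ := hA.playfair p h hph
  exact hgk ((hu g ⟨hpg, fun q ⟨hq1, hq2⟩ => hd1 q ⟨hq2, hq1⟩⟩).trans
    (hu k ⟨hpk, fun q ⟨hq1, hq2⟩ => hd2 q ⟨hq1, hq2⟩⟩).symm)

/-- Through every point there is a unique line parallel to a given line. -/
theorem ap_par_through (hA : IsAffinePlane I) (a : P) (g : L) :
    ∃! h : L, I a h ∧ Parallel I g h := by
  by_cases hag : I a g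
  · refine ⟨g, ⟨hag, Or.inl rfl⟩, ?_⟩
    rintro h ⟨hah, rfl | hd⟩
    · rfl
    · exact absurd ⟨hag, hah⟩ (hd a)
  · obtain ⟨h, ⟨hah, hd⟩, hu⟩ := hA.playfair a g hag
    refine ⟨h, ⟨hah, Or.inr fun q hq => hd q ⟨hq.1, hq.2⟩⟩, ?_⟩
    rintro k ⟨hak, rfl | hd'⟩
    · exact absurd hak hag
    · exact hu k ⟨hak, hd'⟩

theorem ap_class_eq (hA : IsAffinePlane I) {g c : L} (hc : Parallel I g c) :
    {h : L | Parallel I g h} = {h : L | Parallel I c h} := by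
  ext h
  exact ⟨fun hh => ap_par_trans hA (ap_par_symm hA hc) hh,
    fun hh => ap_par_trans hA hc hh⟩

theorem ap_exists_point_ne (hA : IsAffinePlane I) (p : P) : ∃ q : P, q ≠ p := by
  obtain ⟨a, b, c, hab, -, -, -⟩ := hA.nondeg
  by_cases h : a = p
  · exact ⟨b, fun hbp => hab (h.trans hbp.symm)⟩
  · exact ⟨a, h⟩

theorem ap_exists_line_through (hA : IsAffinePlane I) (p : P) : ∃ l : L, I p l := by
  obtain ⟨q, hq⟩ := ap_exists_point_ne hA p
  obtain ⟨l, ⟨h1, h2⟩, -⟩ := hA.point_line q p hq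
  exact ⟨l, h2⟩

theorem ap_exists_line_not_through (hA : IsAffinePlane I) (p : P) : ∃ l : L, ¬ I p l := by
  obtain ⟨a, b, c, hab, hac, hbc, habc⟩ := hA.nondeg
  obtain ⟨lab, ⟨ha1, hb1⟩, hu1⟩ := hA.point_line a b hab
  obtain ⟨lac, ⟨ha2, hc2⟩, -⟩ := hA.point_line a c hac
  obtain ⟨lbc, ⟨hb3, hc3⟩, -⟩ := hA.point_line b c hbc
  by_cases h1 : I p lab
  · by_cases h2 : I p lac
    · -- p = a, so p not on lbc
      have hpa : p = a := by
        by_contra hpa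
        obtain ⟨l', -, hu'⟩ := hA.point_line p a hpa
        have : lab = lac := (hu' lab ⟨h1, ha1⟩).trans (hu' lac ⟨h2, ha2⟩).symm
        exact habc lab ⟨ha1, hb1, this ▸ hc2⟩
      exact ⟨lbc, fun h => habc lbc ⟨hpa ▸ h, hb3, hc3⟩⟩
    · exact ⟨lac, h2⟩
  · exact ⟨lab, h1⟩

end APHelpers
section APCount

variable {P L : Type} {I : P → L → Prop} {m : ℕ}

/-- In an affine plane of order `m`, exactly `m + 1` lines pass through each point. -/
theorem ap_lines_through_card (hA : IsAffinePlane I) (hO : AffOrder I m) (hm : 2 ≤ m)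
    (p : P) : Nat.card {g : L // I p g} = m + 1 := by
  obtain ⟨l, hl⟩ := ap_exists_line_not_through hA p
  have hpl : ∀ q : P, I q l → p ≠ q := fun q hq he => hl (he ▸ hq)
  -- the joining line for q on l
  let J : {q : P // I q l} → {g : L // I p g} := fun q =>
    ⟨(hA.point_line p q.1 (hpl q.1 q.2)).choose,
      (hA.point_line p q.1 (hpl q.1 q.2)).choose_spec.1.1⟩
  have hJq : ∀ q : {q : P // I q l}, I q.1 (J q).1 :=
    fun q => (hA.point_line p q.1 (hpl q.1 q.2)).choose_spec.1.2
  have hJu : ∀ (q : {q : P // I q l}) (g : L), I p g → I q.1 g → g = (J q).1 :=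
    fun q g h1 h2 => (hA.point_line p q.1 (hpl q.1 q.2)).choose_spec.2 g ⟨h1, h2⟩
  -- the parallel line through p
  let E : {g : L // I p g} := ⟨(hA.playfair p l hl).choose, (hA.playfair p l hl).choose_spec.1.1⟩
  have hEd : ∀ q : P, ¬(I q l ∧ I q E.1) := (hA.playfair p l hl).choose_spec.1.2
  have hEu : ∀ g : L, I p g → (∀ q : P, ¬(I q l ∧ I q g)) → g = E.1 :=
    fun g h1 h2 => (hA.playfair p l hl).choose_spec.2 g ⟨h1, h2⟩
  let f : {q : P // I q l} ⊕ Unit → {g : L // I p g} := fun x =>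
    match x with
    | Sum.inl q => J q
    | Sum.inr _ => E
  have hbij : Function.Bijective f := by
    constructor
    · rintro (q1 | u1) (q2 | u2) he
      · -- both joins
        have h1 := hJq q1
        have h2 := hJq q2
        simp only [f] at he
        rw [he] at h1
        by_cases hq : q1.1 = q2.1
        · exact congrArg Sum.inl (Subtype.ext hq)
        · obtain ⟨l', -, hu'⟩ := hA.point_line q1.1 q2.1 hq
          have e1 : l = l' := hu' l ⟨q1.2, q2.2⟩
          have e2 : (J q2).1 = l' := hu' _ ⟨h1, h2⟩
          exact absurd ((e1.trans e2.symm) ▸ (J q2).2) hl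
      · exact absurd ⟨q1.2, (congrArg Subtype.val he : (J q1).1 = E.1) ▸ hJq q1⟩ (hEd q1.1)
      · exact absurd ⟨q2.2, (congrArg Subtype.val he : E.1 = (J q2).1).symm ▸ hJq q2⟩
          (hEd q2.1)
      · rfl
    · rintro ⟨g, hg⟩
      by_cases hmeet : ∃ q : P, I q g ∧ I q l
      · obtain ⟨q, hqg, hql⟩ := hmeet
        refine ⟨Sum.inl ⟨q, hql⟩, Subtype.ext ?_⟩
        exact (hJu ⟨q, hql⟩ g hg hqg).symm
      · push_neg at hmeet
        refine ⟨Sum.inr (), Subtype.ext ?_⟩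
        exact (hEu g hg (fun q ⟨h1, h2⟩ => hmeet q h2 h1)).symm
  have hfin : Finite {q : P // I q l} := ap_line_finite hO hm l
  rw [← Nat.card_eq_of_bijective f hbij, Nat.card_sum, hO l]
  simp

/-- An affine plane of order `m ≥ 2` has exactly `m ^ 2` points. -/
theorem ap_points_card (hA : IsAffinePlane I) (hO : AffOrder I m) (hm : 2 ≤ m) :
    Nat.card P = m ^ 2 := by
  classical
  obtain ⟨a, b, c, hab, -, -, -⟩ := hA.nondeg
  set q : P := a with hqdef
  -- fibers: points on g other than q
  let Fib : {g : L // I q g} → Type := fun g => {r : P // I r g.1 ∧ r ≠ q}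
  let f : (Σ g : {g : L // I q g}, Fib g) ⊕ Unit → P := fun x =>
    match x with
    | Sum.inl ⟨g, r⟩ => r.1
    | Sum.inr _ => q
  have hbij : Function.Bijective f := by
    constructor
    · rintro (⟨g1, r1⟩ | u1) (⟨g2, r2⟩ | u2) he
      · simp only [f] at he
        have hg : g1 = g2 := by
          obtain ⟨l', -, hu'⟩ := hA.point_line q r1.1 (Ne.symm r1.2.2)
          have e1 : g1.1 = l' := hu' g1.1 ⟨g1.2, r1.2.1⟩
          have e2 : g2.1 = l' := hu' g2.1 ⟨g2.2, he ▸ r2.2.1⟩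
          exact Subtype.ext (e1.trans e2.symm)
        subst hg
        exact congrArg Sum.inl (congrArg _ (Subtype.ext he))
      · exact absurd he r1.2.2
      · exact absurd he.symm r2.2.2
      · rfl
    · intro r
      by_cases hr : r = q
      · exact ⟨Sum.inr (), hr.symm⟩
      · obtain ⟨l', ⟨h1, h2⟩, -⟩ := hA.point_line q r (Ne.symm hr)
        exact ⟨Sum.inl ⟨⟨l', h1⟩, ⟨r, h2, hr⟩⟩, rfl⟩
  have hgs : Finite {g : L // I q g} :=
    Nat.finite_of_card_ne_zero (by rw [ap_lines_through_card hA hO hm q]; omega)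
  have hfibcard : ∀ g : {g : L // I q g}, Nat.card (Fib g) = m - 1 := by
    intro g
    have hfin : Finite {r : P // I r g.1} := ap_line_finite hO hm g.1
    have he : Option {x : {r : P // I r g.1} // x ≠ ⟨q, g.2⟩} ≃ {r : P // I r g.1} :=
      Equiv.optionSubtypeNe _
    have he2 : Fib g ≃ {x : {r : P // I r g.1} // x ≠ ⟨q, g.2⟩} :=
      { toFun := fun r => ⟨⟨r.1, r.2.1⟩, fun h => r.2.2 (congrArg Subtype.val h)⟩
        invFun := fun x => ⟨x.1.1, x.1.2, fun h => x.2 (Subtype.ext h)⟩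
        left_inv := fun r => rfl
        right_inv := fun x => rfl }
    have h1 : Nat.card (Option {x : {r : P // I r g.1} // x ≠ ⟨q, g.2⟩})
        = Nat.card {r : P // I r g.1} := Nat.card_congr he
    have hfin2 : Finite {x : {r : P // I r g.1} // x ≠ ⟨q, g.2⟩} := Subtype.finite
    rw [Nat.card_congr he2]
    letI := Fintype.ofFinite {x : {r : P // I r g.1} // x ≠ ⟨q, g.2⟩}
    rw [Nat.card_eq_fintype_card] at h1 ⊢
    rw [Fintype.card_option] at h1
    rw [hO g.1] at h1
    omega
  have hfib : ∀ g : {g : L // I q g}, Finite (Fib g) := fun g =>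
    Nat.finite_of_card_ne_zero (by rw [hfibcard g]; omega)
  haveI := hgs
  haveI := hfib
  rw [← Nat.card_eq_of_bijective f hbij, Nat.card_sum]
  letI := Fintype.ofFinite {g : L // I q g}
  letI : ∀ g : {g : L // I q g}, Fintype (Fib g) := fun g => Fintype.ofFinite _
  rw [Nat.card_eq_fintype_card (α := (Σ g : {g : L // I q g}, Fib g)), Fintype.card_sigma]
  have : ∀ g : {g : L // I q g}, Fintype.card (Fib g) = m - 1 := by
    intro g
    rw [← Nat.card_eq_fintype_card, hfibcard g]
  rw [Finset.sum_congr rfl (fun g _ => this g), Finset.sum_const, Finset.card_univ]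
  have hc : Fintype.card {g : L // I q g} = m + 1 := by
    rw [← Nat.card_eq_fintype_card, ap_lines_through_card hA hO hm q]
  have hu1 : Nat.card Unit = 1 := Nat.card_unique
  rw [hc, hu1, smul_eq_mul]
  obtain ⟨k, rfl⟩ : ∃ k, m = k + 2 := ⟨m - 2, by omega⟩
  have h21 : k + 2 - 1 = k + 1 := rfl
  rw [h21]
  ring

end APCount
section DHelpers

variable {m : ℕ} (D : AHData m)

/-- Every point of `𝒜_p` lies on some line of the chosen class `C(p, l)`. -/
theorem d_cov {p : D.Pt} {l : D.Ln} (h : D.I p l) (a : D.APt p) :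
    ∃ s : D.Sym l, D.AI p a (D.C p l h s) := by
  obtain ⟨g, hg⟩ := D.C_class p l h
  obtain ⟨k, ⟨hak, hpk⟩, -⟩ := ap_par_through (D.aff p) a g
  have hk : k ∈ Set.range (D.C p l h) := by rw [hg]; exact hpk
  obtain ⟨s, hs⟩ := hk
  exact ⟨s, hs ▸ hak⟩

theorem d_range_class {p : D.Pt} {l : D.Ln} (h : D.I p l) {c : D.ALn p}
    (hc : c ∈ Set.range (D.C p l h)) :
    Set.range (D.C p l h) = {h' : D.ALn p | Parallel (D.AI p) c h'} := by
  obtain ⟨g, hg⟩ := D.C_class p l h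
  rw [hg] at hc ⊢
  exact ap_class_eq (D.aff p) hc

theorem d_class_unique {p : D.Pt} {l₁ l₂ : D.Ln} (h₁ : D.I p l₁) (h₂ : D.I p l₂)
    {c : D.ALn p} (hc₁ : c ∈ Set.range (D.C p l₁ h₁)) (hc₂ : c ∈ Set.range (D.C p l₂ h₂)) :
    l₁ = l₂ := by
  by_contra hne
  exact D.C_distinct p l₁ l₂ h₁ h₂ hne
    ((d_range_class D h₁ hc₁).trans (d_range_class D h₂ hc₂).symm)

/-- Every line of `𝒜_p` belongs to some chosen class `C(p, l)`. -/
theorem d_class_exists (hm : 2 ≤ m) (p : D.Pt) (c : D.ALn p) :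
    ∃ (l : D.Ln) (h : D.I p l), c ∈ Set.range (D.C p l h) := by
  classical
  obtain ⟨q₀, hq₀⟩ := ap_line_exists (D.aord p) hm c
  let G : {l : D.Ln // D.I p l} → {c' : D.ALn p // D.AI p q₀ c'} := fun lh =>
    ⟨D.C p lh.1 lh.2 (d_cov D lh.2 q₀).choose, (d_cov D lh.2 q₀).choose_spec⟩
  have hGmem : ∀ lh : {l : D.Ln // D.I p l}, (G lh).1 ∈ Set.range (D.C p lh.1 lh.2) :=
    fun lh => ⟨_, rfl⟩
  have hGinj : Function.Injective G := by
    intro l1 l2 he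
    have h1 := hGmem l1
    have h2 := hGmem l2
    rw [he] at h1
    exact Subtype.ext (d_class_unique D l1.2 l2.2 h1 h2)
  have hc1 : Nat.card {l : D.Ln // D.I p l} = m + 1 :=
    ap_lines_through_card D.base D.ord hm p
  have hc2 : Nat.card {c' : D.ALn p // D.AI p q₀ c'} = m + 1 :=
    ap_lines_through_card (D.aff p) (D.aord p) hm q₀
  have hfin : Finite {c' : D.ALn p // D.AI p q₀ c'} :=
    Nat.finite_of_card_ne_zero (by rw [hc2]; omega)
  have hGbij : Function.Bijective G :=
    (Nat.bijective_iff_injective_and_card G).mpr ⟨hGinj, by rw [hc1, hc2]⟩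
  obtain ⟨lh, hlh⟩ := hGbij.2 ⟨c, hq₀⟩
  refine ⟨lh.1, lh.2, ?_⟩
  have : (G lh).1 = c := congrArg Subtype.val hlh
  exact this ▸ hGmem lh

theorem d_row_fiber (hm : 2 ≤ m) {l : D.Ln} {p : D.Pt} (hp : D.I p l) (s : D.Sym l) :
    Nat.card {r : D.Row l // D.O l r ⟨p, hp⟩ = s} = m := by
  obtain ⟨p₁, p₂, hne, h1, h2⟩ := ap_line_two D.ord hm l
  have hq : ∃ (q : D.Pt) (hq : D.I q l), q ≠ p := by
    by_cases h : p₁ = p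
    · exact ⟨p₂, h2, fun e => hne (h.trans e.symm)⟩
    · exact ⟨p₁, h1, h⟩
  obtain ⟨q, hql, hqp⟩ := hq
  have hcol : (⟨p, hp⟩ : {x : D.Pt // D.I x l}) ≠ ⟨q, hql⟩ :=
    fun e => hqp (congrArg Subtype.val e).symm
  have hb := D.oa l ⟨p, hp⟩ ⟨q, hql⟩ hcol
  let f : {r : D.Row l // D.O l r ⟨p, hp⟩ = s} → D.Sym l := fun r => D.O l r.1 ⟨q, hql⟩
  have hfb : Function.Bijective f := by
    constructor
    · rintro ⟨r1, e1⟩ ⟨r2, e2⟩ he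
      have hpr : (D.O l r1 ⟨p,hp⟩, D.O l r1 ⟨q,hql⟩) = (D.O l r2 ⟨p,hp⟩, D.O l r2 ⟨q,hql⟩) := by
        rw [e1, e2]
        exact Prod.ext rfl he
      exact Subtype.ext (hb.1 hpr)
    · intro t
      obtain ⟨r, hr⟩ := hb.2 (s, t)
      exact ⟨⟨r, congrArg Prod.fst hr⟩, congrArg Prod.snd hr⟩
  rw [Nat.card_eq_of_bijective f hfb, D.sym_card l]

theorem d_row_exists (hm : 2 ≤ m) {l : D.Ln} {p : D.Pt} (hp : D.I p l) (s : D.Sym l) :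
    ∃ r : D.Row l, D.O l r ⟨p, hp⟩ = s := by
  have h := Nat.card_ne_zero.mp (by rw [d_row_fiber D hm hp s]; omega :
    Nat.card {r : D.Row l // D.O l r ⟨p, hp⟩ = s} ≠ 0)
  obtain ⟨⟨r, hr⟩⟩ := h.1
  exact ⟨r, hr⟩

end DHelpers
section Transfer

/-- Transfer of the affine plane axioms along a pair of bijections. -/
theorem isAffinePlane_transfer {P L P' L' : Type} {I : P → L → Prop} {I' : P' → L' → Prop}
    (eP : P ≃ P') (eL : L ≃ L') (hI : ∀ p l, I p l ↔ I' (eP p) (eL l))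
    (hA : IsAffinePlane I) : IsAffinePlane I' := by
  have hI' : ∀ (p' : P') (l' : L'), I' p' l' ↔ I (eP.symm p') (eL.symm l') := by
    intro p' l'
    rw [hI]
    simp
  constructor
  · intro p q hpq
    have hne : eP.symm p ≠ eP.symm q := fun e => hpq (by simpa using congrArg eP e)
    obtain ⟨l, ⟨h1, h2⟩, hu⟩ := hA.point_line _ _ hne
    refine ⟨eL l, ⟨?_, ?_⟩, ?_⟩
    · have := (hI _ l).mp h1
      simpa using this
    · have := (hI _ l).mp h2
      simpa using this
    · rintro l' ⟨h1', h2'⟩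
      have e := hu (eL.symm l') ⟨(hI' p l').mp h1', (hI' q l').mp h2'⟩
      calc l' = eL (eL.symm l') := (eL.apply_symm_apply l').symm
        _ = eL l := congrArg eL e
  · intro p' l' hnot
    have hnot' : ¬ I (eP.symm p') (eL.symm l') := fun h => hnot ((hI' p' l').mpr h)
    obtain ⟨g, ⟨h1, hd⟩, hu⟩ := hA.playfair _ _ hnot'
    refine ⟨eL g, ⟨?_, ?_⟩, ?_⟩
    · have := (hI _ g).mp h1
      simpa using this
    · rintro q' ⟨ha, hb⟩
      have ha' := (hI' q' l').mp ha
      have hb' : I (eP.symm q') g := by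
        have := (hI' q' (eL g)).mp hb
        simpa using this
      exact hd _ ⟨ha', hb'⟩
    · rintro g' ⟨h1', hd'⟩
      have e := hu (eL.symm g') ⟨(hI' p' g').mp h1', ?_⟩
      · calc g' = eL (eL.symm g') := (eL.apply_symm_apply g').symm
          _ = eL g := congrArg eL e
      · rintro q ⟨ha, hb⟩
        refine hd' (eP q) ⟨?_, ?_⟩
        · have := (hI q (eL.symm l')).mp ha
          simpa using this
        · have := (hI q (eL.symm g')).mp hb
          simpa using this
  · obtain ⟨a, b, c, hab, hac, hbc, habc⟩ := hA.nondeg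
    refine ⟨eP a, eP b, eP c, fun e => hab (eP.injective e), fun e => hac (eP.injective e),
      fun e => hbc (eP.injective e), ?_⟩
    rintro l' ⟨ha, hb, hc⟩
    exact habc (eL.symm l') ⟨(hI a _).mpr (by simpa using ha),
      (hI b _).mpr (by simpa using hb), (hI c _).mpr (by simpa using hc)⟩

end Transfer

section SLine

variable {m : ℕ} (D : AHData m)

/-- The set of points of `ℋ` in the neighbourhood of `p` corresponding to the line `c`
of `𝒜_p`. -/
def d_SLine (p : D.Pt) (c : D.ALn p) : Set D.HPt :=
  {q | ∃ e : q.1 = p, D.AI p (e ▸ q.2) c}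

theorem d_SLine_mem {p : D.Pt} {b : D.APt p} {c : D.ALn p} :
    (⟨p, b⟩ : D.HPt) ∈ d_SLine D p c ↔ D.AI p b c := by
  constructor
  · rintro ⟨e, hb⟩
    exact hb
  · intro hb
    exact ⟨rfl, hb⟩

theorem d_SLine_inj (hm : 2 ≤ m) {p : D.Pt} {c c' : D.ALn p}
    (h : d_SLine D p c = d_SLine D p c') : c = c' := by
  refine ap_line_ext (D.aff p) (D.aord p) hm (fun b => ?_)
  rw [← d_SLine_mem D, ← d_SLine_mem D, h]

theorem d_SLine_nonempty (hm : 2 ≤ m) {p : D.Pt} (c : D.ALn p) :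
    (d_SLine D p c).Nonempty := by
  obtain ⟨b, hb⟩ := ap_line_exists (D.aord p) hm c
  exact ⟨⟨p, b⟩, (d_SLine_mem D).mpr hb⟩

/-- The neighbourhood restriction of the `ℋ`-line `(l, r)` to the neighbourhood of `(p, a)`
is the point set of the corresponding line of `𝒜_p`. -/
theorem d_restrict_eq {p : D.Pt} {a : D.APt p} {l : D.Ln} (r : D.Row l) (h : D.I p l) :
    {q : D.HPt | D.nPt q ⟨p, a⟩ ∧ D.HI q ⟨l, r⟩}
      = d_SLine D p (D.C p l h (D.O l r ⟨p, h⟩)) := by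
  ext q
  obtain ⟨p', b⟩ := q
  constructor
  · rintro ⟨hn, hH⟩
    have hn' : p' = p := hn
    subst hn'
    obtain ⟨h', hb⟩ := hH
    exact (d_SLine_mem D).mpr hb
  · rintro ⟨e, hb⟩
    have e' : p' = p := e
    subst e'
    exact ⟨rfl, h, hb⟩

theorem d_restrict_empty {p : D.Pt} {a : D.APt p} {l : D.Ln} (r : D.Row l) (h : ¬ D.I p l) :
    {q : D.HPt | D.nPt q ⟨p, a⟩ ∧ D.HI q ⟨l, r⟩} = ∅ := by
  ext q
  obtain ⟨p', b⟩ := q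
  refine ⟨fun hq => absurd hq ?_, fun hq => hq.elim⟩
  rintro ⟨hn, hH⟩
  have hn' : p' = p := hn
  subst hn'
  exact h hH.1

/-- Characterization of the lines of the neighbourhood restriction at `(p, a)`. -/
theorem d_nbrLines_iff (hm : 2 ≤ m) {p : D.Pt} {a : D.APt p} (s : Set D.HPt) :
    s ∈ NbrLines D.HI D.nPt ⟨p, a⟩ ↔ ∃ c : D.ALn p, s = d_SLine D p c := by
  constructor
  · rintro ⟨hne, ⟨l, r⟩, rfl⟩
    by_cases h : D.I p l
    · exact ⟨_, d_restrict_eq D r h⟩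
    · rw [d_restrict_empty D r h] at hne
      exact absurd hne (by simp)
  · rintro ⟨c, rfl⟩
    refine ⟨d_SLine_nonempty D hm c, ?_⟩
    obtain ⟨l, h, s, hs⟩ := d_class_exists D hm p c
    obtain ⟨r, hr⟩ := d_row_exists D hm h s
    exact ⟨⟨l, r⟩, by rw [d_restrict_eq D r h, hr, hs]⟩

/-- Joining two points of `ℋ`. -/
theorem d_join (hm : 2 ≤ m) (x y : D.HPt) : ∃ g : D.HLn, D.HI x g ∧ D.HI y g := by
  obtain ⟨p, a⟩ := x
  obtain ⟨q, b⟩ := y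
  by_cases hpq : p = q
  · subst hpq
    have hc : ∃ c : D.ALn p, D.AI p a c ∧ D.AI p b c := by
      by_cases hab : a = b
      · subst hab
        obtain ⟨c, hc⟩ := ap_exists_line_through (D.aff p) a
        exact ⟨c, hc, hc⟩
      · obtain ⟨c, hc, -⟩ := (D.aff p).point_line a b hab
        exact ⟨c, hc⟩
    obtain ⟨c, hca, hcb⟩ := hc
    obtain ⟨l, h, s, hs⟩ := d_class_exists D hm p c
    obtain ⟨r, hr⟩ := d_row_exists D hm h s
    exact ⟨⟨l, r⟩, ⟨h, by rw [hr, hs]; exact hca⟩, ⟨h, by rw [hr, hs]; exact hcb⟩⟩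
  · obtain ⟨l, ⟨hp, hq⟩, -⟩ := D.base.point_line p q hpq
    obtain ⟨sa, hsa⟩ := d_cov D hp a
    obtain ⟨sb, hsb⟩ := d_cov D hq b
    have hcol : (⟨p, hp⟩ : {x : D.Pt // D.I x l}) ≠ ⟨q, hq⟩ :=
      fun e => hpq (congrArg Subtype.val e)
    obtain ⟨r, hr⟩ := (D.oa l ⟨p, hp⟩ ⟨q, hq⟩ hcol).2 (sa, sb)
    refine ⟨⟨l, r⟩, ⟨hp, ?_⟩, ⟨hq, ?_⟩⟩
    · rw [show D.O l r ⟨p, hp⟩ = sa from congrArg Prod.fst hr]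
      exact hsa
    · rw [show D.O l r ⟨q, hq⟩ = sb from congrArg Prod.snd hr]
      exact hsb

end SLine

section Inj

variable {m : ℕ} {D : AHData m}

theorem d_hpt_inj {p : D.Pt} {b1 b2 : D.APt p} (h : (⟨p, b1⟩ : D.HPt) = ⟨p, b2⟩) :
    b1 = b2 := by
  injection h

theorem d_hln_inj {l : D.Ln} {r1 r2 : D.Row l} (h : (⟨l, r1⟩ : D.HLn) = ⟨l, r2⟩) :
    r1 = r2 := by
  injection h

end Inj
/-- For `m ≥ 2`, the structure `ℋ` produced by the affine Hjelmslev
construction, with point-neighbour relation "same first coordinate", line-neighbour relation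
"same first coordinate", and quotient maps the first projections, is a 2-uniform `(m, m)`
affine Hjelmslev plane with `m⁴` points. -/
theorem affine_hjelmslev_construction_is_2uniform_AH_plane (m : ℕ) (hm : 2 ≤ m)
    (D : AHData m) :
    IsAHPlaneWith D.HI D.nPt D.nLn D.I (fun x => x.1) (fun g => g.1) ∧
    NbrsOnLines D.HI D.nPt m ∧ AffOrder D.I m ∧
    TwoUniform D.HI D.nPt ∧
    Nat.card D.HPt = m ^ 4 := by
  classical
  have hm2 : m ^ 2 ≠ 0 := by
    have : m ≠ 0 := by omega
    positivity
  refine ⟨?_, ?_, D.ord, ?_, ?_⟩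
  · -- IsAHPlaneWith
    refine
      { nP_equiv := ⟨fun _ => rfl, fun h => h.symm, fun h1 h2 => h1.trans h2⟩
        nL_equiv := ⟨fun _ => rfl, fun h => h.symm, fun h1 h2 => h1.trans h2⟩
        join := d_join D hm
        line_nbr := ?_
        target_aff := D.base
        φP_surj := ?_
        φL_surj := ?_
        incid_pres := fun x g hI => by obtain ⟨h, -⟩ := hI; exact h
        nP_iff := fun _ _ => Iff.rfl
        nL_iff := fun _ _ => Iff.rfl
        par := ?_ }
    · -- line_nbr
      rintro ⟨l, r⟩ ⟨l', r'⟩ ⟨⟨p, a⟩, ⟨q, b⟩, hxy, ⟨h1, ha1⟩, ⟨h2, ha2⟩, ⟨h3, hb1⟩, ⟨h4, hb2⟩⟩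
      show l = l'
      by_cases hpq : p = q
      · subst hpq
        have hab : a ≠ b := fun e => hxy (by rw [e])
        obtain ⟨cl, -, hu⟩ := (D.aff p).point_line a b hab
        have e1 : D.C p l h1 (D.O l r ⟨p, h1⟩) = cl := hu _ ⟨ha1, hb1⟩
        have e2 : D.C p l' h2 (D.O l' r' ⟨p, h2⟩) = cl := hu _ ⟨ha2, hb2⟩
        exact d_class_unique D h1 h2 ⟨_, e1⟩ ⟨_, e2⟩
      · obtain ⟨l0, -, hu⟩ := D.base.point_line p q hpq
        exact (hu l ⟨h1, h3⟩).trans (hu l' ⟨h2, h4⟩).symm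
    · -- φP_surj
      intro p
      obtain ⟨a, -⟩ := (D.aff p).nondeg
      exact ⟨⟨p, a⟩, rfl⟩
    · -- φL_surj
      intro l
      have hne : Nonempty (D.Row l) :=
        (Nat.card_ne_zero.mp (by rw [D.row_card l]; exact hm2)).1
      obtain ⟨r⟩ := hne
      exact ⟨⟨l, r⟩, rfl⟩
    · -- par
      rintro ⟨l, r⟩ ⟨l', r'⟩ hd
      by_cases hll : l = l'
      · exact Or.inl hll
      refine Or.inr fun p ⟨hpl, hpl'⟩ => ?_
      have hnp : ¬ Parallel (D.AI p) (D.C p l hpl (D.O l r ⟨p, hpl⟩))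
          (D.C p l' hpl' (D.O l' r' ⟨p, hpl'⟩)) := by
        intro hpar
        apply D.C_distinct p l l' hpl hpl' hll
        rw [d_range_class D hpl ⟨_, rfl⟩, d_range_class D hpl' ⟨_, rfl⟩]
        exact ap_class_eq (D.aff p) hpar
      rw [Parallel, not_or, not_forall] at hnp
      obtain ⟨-, a, ha⟩ := hnp
      rw [not_not] at ha
      exact hd ⟨p, a⟩ ⟨⟨hpl, ha.1⟩, ⟨hpl', ha.2⟩⟩
  · -- NbrsOnLines
    rintro ⟨l, r⟩ ⟨p, a⟩ ⟨h, ha⟩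
    have key : Nat.card {b : D.APt p // D.AI p b (D.C p l h (D.O l r ⟨p, h⟩))} = m :=
      D.aord p _
    have hbe := Nat.card_eq_of_bijective
      (fun b : {b : D.APt p // D.AI p b (D.C p l h (D.O l r ⟨p, h⟩))} =>
        (⟨⟨p, b.1⟩, ⟨h, b.2⟩, rfl⟩ :
          {q : D.HPt // D.HI q ⟨l, r⟩ ∧ D.nPt ⟨p, a⟩ q})) ⟨?_, ?_⟩
    · rw [← hbe]
      exact key
    · rintro ⟨b1, hb1⟩ ⟨b2, hb2⟩ he
      exact Subtype.ext (d_hpt_inj (congrArg Subtype.val he))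
    · rintro ⟨⟨p', b⟩, hH, hn⟩
      have hn' : p = p' := hn
      subst hn'
      obtain ⟨h', hb⟩ := hH
      exact ⟨⟨b, hb⟩, rfl⟩
  · -- TwoUniform
    intro x
    obtain ⟨p, a⟩ := x
    constructor
    · -- the neighbourhood restriction is an affine plane
      have ePb : Function.Bijective (fun b : D.APt p =>
          (⟨⟨p, b⟩, rfl⟩ : {q : D.HPt // D.nPt q ⟨p, a⟩})) := by
        constructor
        · intro b1 b2 he
          exact d_hpt_inj (congrArg Subtype.val he)
        · rintro ⟨⟨p', b⟩, hn⟩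
          have hn' : p' = p := hn
          subst hn'
          exact ⟨b, rfl⟩
      have eLb : Function.Bijective (fun c : D.ALn p =>
          (⟨d_SLine D p c, (d_nbrLines_iff D hm _).mpr ⟨c, rfl⟩⟩ :
            NbrLines D.HI D.nPt ⟨p, a⟩)) := by
        constructor
        · intro c1 c2 he
          exact d_SLine_inj D hm (congrArg Subtype.val he)
        · rintro ⟨s, hs⟩
          obtain ⟨c, rfl⟩ := (d_nbrLines_iff D hm s).mp hs
          exact ⟨c, rfl⟩
      exact isAffinePlane_transfer (Equiv.ofBijective _ ePb) (Equiv.ofBijective _ eLb)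
        (fun b c => (d_SLine_mem D).symm) (D.aff p)
    · -- each restriction line comes from exactly m lines of ℋ
      refine ⟨m, fun s => ?_⟩
      obtain ⟨c, hc⟩ := (d_nbrLines_iff D hm (s : Set D.HPt)).mp s.2
      obtain ⟨l₀, h₀, s₀, hs₀⟩ := d_class_exists D hm p c
      have key := d_row_fiber D hm h₀ s₀
      have hbe := Nat.card_eq_of_bijective
        (fun rr : {r : D.Row l₀ // D.O l₀ r ⟨p, h₀⟩ = s₀} =>
          (⟨⟨l₀, rr.1⟩, by rw [d_restrict_eq D rr.1 h₀, rr.2, hs₀, ← hc]⟩ :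
            {g : D.HLn // {q : D.HPt | D.nPt q ⟨p, a⟩ ∧ D.HI q g} = (s : Set D.HPt)}))
        ⟨?_, ?_⟩
      · rw [← hbe]
        exact key
      · rintro ⟨r1, e1⟩ ⟨r2, e2⟩ he
        exact Subtype.ext (d_hln_inj (congrArg Subtype.val he))
      · rintro ⟨⟨l, r⟩, hset⟩
        have hne : ({q : D.HPt | D.nPt q ⟨p, a⟩ ∧ D.HI q ⟨l, r⟩}).Nonempty := by
          rw [hset, hc]
          exact d_SLine_nonempty D hm c
        obtain ⟨⟨p', b⟩, hn, hH⟩ := hne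
        have hn' : p' = p := hn
        subst hn'
        obtain ⟨h, -⟩ := hH
        have heq : d_SLine D p' (D.C p' l h (D.O l r ⟨p', h⟩)) = d_SLine D p' c := by
          rw [← d_restrict_eq D r h (a := a), hset, hc]
        have hceq := d_SLine_inj D hm heq
        have hl : l = l₀ := d_class_unique D h h₀ ⟨_, hceq⟩ ⟨s₀, hs₀⟩
        subst hl
        have hOr : D.O l r ⟨p', h₀⟩ = s₀ := by
          apply D.C_inj p' l h₀
          rw [hs₀]
          exact hceq
        exact ⟨⟨r, hOr⟩, Subtype.ext rfl⟩
  · -- number of points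
    have hPtfin : Finite D.Pt := Nat.finite_of_card_ne_zero
      (by rw [ap_points_card D.base D.ord hm]; exact hm2)
    have hAfin : ∀ p : D.Pt, Finite (D.APt p) := fun p => Nat.finite_of_card_ne_zero
      (by rw [ap_points_card (D.aff p) (D.aord p) hm]; exact hm2)
    haveI := hPtfin
    haveI := hAfin
    letI : Fintype D.Pt := Fintype.ofFinite _
    letI : ∀ p : D.Pt, Fintype (D.APt p) := fun p => Fintype.ofFinite _
    show Nat.card (Σ p : D.Pt, D.APt p) = m ^ 4
    rw [Nat.card_eq_fintype_card, Fintype.card_sigma]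
    have hA : ∀ p : D.Pt, Fintype.card (D.APt p) = m ^ 2 := fun p => by
      rw [← Nat.card_eq_fintype_card]
      exact ap_points_card (D.aff p) (D.aord p) hm
    rw [Finset.sum_congr rfl (fun p _ => hA p), Finset.sum_const, Finset.card_univ,
      ← Nat.card_eq_fintype_card, ap_points_card D.base D.ord hm, smul_eq_mul]
    ring
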